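/- Fix y ∈ [0,1). For b ≥ y, let w_b be the solution of (σ²/2)w'' + (μ - α((1-x)^+))w' - rw = 0 with w_b(b) = (μ - α((1-b)^+))/r and w_b'(b) = 1. Then the map b ↦ w_b(y) is nondecreasing on [y,1] and strictly decreasing on (1,∞). -/

import Mathlib

open Set

noncomputable def vf (m : ℝ → ℝ) (k ρ : ℝ) : ℝ → ℝ × ℝ → ℝ × ℝ :=
  fun t x => (x.2, k * (ρ * x.1 - m t * x.2))

lemma vf_lip {m : ℝ → ℝ} {k ρ K : ℝ} {t : ℝ} (hK1 : 1 ≤ K)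
    (hb : |k| * (|ρ| + |m t|) ≤ K) (x x' : ℝ × ℝ) :
    ‖vf m k ρ t x - vf m k ρ t x'‖ ≤ K * ‖x - x'‖ := by
  have h1 : |x.1 - x'.1| ≤ ‖x - x'‖ := by
    rw [Prod.norm_def]; exact le_max_of_le_left (le_of_eq (Real.norm_eq_abs _).symm)
  have h2 : |x.2 - x'.2| ≤ ‖x - x'‖ := by
    rw [Prod.norm_def]; exact le_max_of_le_right (le_of_eq (Real.norm_eq_abs _).symm)
  have hd : (0:ℝ) ≤ ‖x - x'‖ := norm_nonneg _
  rw [Prod.norm_def]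
  apply max_le
  · simpa [vf] using h2.trans (by nlinarith)
  · have he : (vf m k ρ t x - vf m k ρ t x').2
        = k * (ρ * (x.1 - x'.1) - m t * (x.2 - x'.2)) := by
      simp [vf]; ring
    rw [he, Real.norm_eq_abs]
    have hstep : |k * (ρ * (x.1 - x'.1) - m t * (x.2 - x'.2))|
        ≤ |k| * (|ρ| * |x.1 - x'.1| + |m t| * |x.2 - x'.2|) := by
      rw [abs_mul]
      gcongr
      exact (abs_sub _ _).trans (by rw [abs_mul, abs_mul])
    have hk0 : (0:ℝ) ≤ |k| := abs_nonneg _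
    have hr0 : (0:ℝ) ≤ |ρ| := abs_nonneg _
    have hm0 : (0:ℝ) ≤ |m t| := abs_nonneg _
    nlinarith [mul_le_mul_of_nonneg_left h1 (mul_nonneg hk0 hr0), mul_le_mul_of_nonneg_left h2 (mul_nonneg hk0 hm0), mul_le_mul_of_nonneg_right hb hd]

lemma pl_step {m : ℝ → ℝ} (hm : Continuous m) {k ρ K : ℝ} (hK1 : 1 ≤ K)
    {t₀ t₁ : ℝ} (hb : ∀ t ∈ Icc t₀ t₁, |k| * (|ρ| + |m t|) ≤ K)
    (h01 : t₀ ≤ t₁) (hstep : t₁ - t₀ ≤ 1 / (2 * K)) (x₀ : ℝ × ℝ) :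
    ∃ f : ℝ → ℝ × ℝ, f t₀ = x₀ ∧
      ∀ t ∈ Icc t₀ t₁, HasDerivWithinAt f (vf m k ρ t (f t)) (Icc t₀ t₁) t := by
  have hK0 : (0:ℝ) < K := lt_of_lt_of_le one_pos hK1
  have hpl : IsPicardLindelof (vf m k ρ) (tmin := t₀) (tmax := t₁) ⟨t₀, le_refl _, h01⟩ x₀
      ⟨‖x₀‖ + 1, by positivity⟩ 0 ⟨2 * K * (‖x₀‖ + 1), by positivity⟩ K.toNNReal := by
    constructor
    · intro t ht
      apply LipschitzOnWith.of_dist_le_mul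
      intro a _ b _
      rw [dist_eq_norm, dist_eq_norm, Real.coe_toNNReal _ hK0.le]
      exact vf_lip hK1 (hb t ht) a b
    · intro x _
      exact (continuous_const.prodMk (continuous_const.mul
        ((continuous_const.sub ((hm.mul continuous_const))).comp continuous_id))).continuousOn
    · intro t ht x hx
      have h0 : vf m k ρ t 0 = 0 := by simp [vf]
      have : ‖vf m k ρ t x‖ ≤ K * ‖x‖ := by
        simpa [h0] using vf_lip hK1 (hb t ht) x 0
      have hxn : ‖x‖ ≤ ‖x₀‖ + (‖x₀‖ + 1) := by
        have := mem_closedBall_iff_norm.mp hx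
        have : ‖x‖ - ‖x₀‖ ≤ ‖x₀‖ + 1 := (norm_sub_norm_le _ _).trans this
        linarith
      calc ‖vf m k ρ t x‖ ≤ K * ‖x‖ := this
        _ ≤ K * (2 * ‖x₀‖ + 1) := by nlinarith [norm_nonneg x]
        _ ≤ 2 * K * (‖x₀‖ + 1) := by nlinarith [norm_nonneg x₀]
    · simp only [NNReal.coe_mk, NNReal.coe_zero, sub_zero]
      show 2 * K * (‖x₀‖ + 1) * max (t₁ - t₀) (t₀ - t₀) ≤ ‖x₀‖ + 1
      have hmax : max (t₁ - t₀) (t₀ - t₀) = t₁ - t₀ := by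
        rw [sub_self]; exact max_eq_left (by linarith)
      rw [hmax]
      have h1 : 2 * K * (‖x₀‖ + 1) * (t₁ - t₀) ≤ 2 * K * (‖x₀‖ + 1) * (1 / (2 * K)) := by
        have : (0:ℝ) ≤ 2 * K * (‖x₀‖ + 1) := by positivity
        nlinarith
      have h2 : 2 * K * (‖x₀‖ + 1) * (1 / (2 * K)) = ‖x₀‖ + 1 := by
        field_simp
      linarith
  exact hpl.exists_eq_forall_mem_Icc_hasDerivWithinAt₀

lemma ode_global {m : ℝ → ℝ} (hm : Continuous m) (k ρ : ℝ) {y B : ℝ} (hyB : y ≤ B)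
    (x₀ : ℝ × ℝ) :
    ∃ f : ℝ → ℝ × ℝ, f y = x₀ ∧
      ∀ t ∈ Icc y B, HasDerivWithinAt f (vf m k ρ t (f t)) (Icc y B) t := by
  obtain ⟨M, hM⟩ := isCompact_Icc.exists_bound_of_continuousOn
    (hm.continuousOn : ContinuousOn m (Icc y B))
  set K : ℝ := 1 + |k| * (|ρ| + max M 0) with hKdef
  have hK1 : 1 ≤ K := by
    have : (0:ℝ) ≤ |k| * (|ρ| + max M 0) :=
      mul_nonneg (abs_nonneg _) (add_nonneg (abs_nonneg _) (le_max_right _ _))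
    linarith
  have hK0 : (0:ℝ) < K := lt_of_lt_of_le one_pos hK1
  have hbound : ∀ t ∈ Icc y B, |k| * (|ρ| + |m t|) ≤ K := by
    intro t ht
    have h1 : |m t| ≤ max M 0 := le_max_of_le_left (by simpa [Real.norm_eq_abs] using hM t ht)
    have : |k| * (|ρ| + |m t|) ≤ |k| * (|ρ| + max M 0) := by gcongr
    linarith
  set δ : ℝ := 1 / (2 * K) with hδdef
  have hδ0 : 0 < δ := by positivity
  set c : ℕ → ℝ := fun n => min B (y + n * δ) with hcdef
  have hcy : ∀ n, y ≤ c n := fun n =>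
    le_min hyB (by nlinarith [Nat.cast_nonneg (α := ℝ) n])
  have hcB : ∀ n, c n ≤ B := fun n => min_le_left _ _
  have hcmono : ∀ n, c n ≤ c (n + 1) := by
    intro n
    apply min_le_min le_rfl
    have : (n:ℝ) ≤ (n+1:ℕ) := by push_cast; linarith
    nlinarith
  have hcstep : ∀ n, c (n + 1) - c n ≤ δ := by
    intro n
    rcases le_or_gt B (y + n * δ) with h | h
    · have h1 : c n = B := min_eq_left h
      have h2 : c (n+1) = B := min_eq_left (h.trans (by push_cast; nlinarith))
      rw [h1, h2]; linarith
    · have h1 : c n = y + n * δ := min_eq_right h.le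
      have h2 : c (n+1) ≤ y + (n+1:ℕ) * δ := min_le_right _ _
      push_cast at h2 ⊢
      rw [h1]; push_cast; linarith
  have main : ∀ n : ℕ, ∃ f : ℝ → ℝ × ℝ, f y = x₀ ∧
      ∀ t ∈ Icc y (c n), HasDerivWithinAt f (vf m k ρ t (f t)) (Icc y (c n)) t := by
    intro n
    induction n with
    | zero =>
      refine ⟨fun _ => x₀, rfl, ?_⟩
      have hc0 : c 0 = y := by simp [hcdef, hyB]
      intro t ht
      rw [hc0] at ht ⊢
      rw [Icc_self] at ht ⊢
      rw [hasDerivWithinAt_iff_tendsto_slope]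
      have : ({y} : Set ℝ) \ {t} = ∅ := by
        rcases ht with rfl; simp
      rcases ht with rfl
      simp only [this]
      simp [nhdsWithin_empty]
    | succ n ih =>
      obtain ⟨f, hf0, hf⟩ := ih
      rcases eq_or_lt_of_le (hcmono n) with heq | hlt
      · refine ⟨f, hf0, ?_⟩
        rw [← heq]; exact hf
      · obtain ⟨g, hg0, hg⟩ := pl_step hm hK1
          (fun t ht => hbound t ⟨(hcy n).trans ht.1, ht.2.trans (hcB (n+1))⟩)
          (hcmono n) (hcstep n) (f (c n))
        set h : ℝ → ℝ × ℝ := fun t => if t ≤ c n then f t else g t with hhdef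
        have hhf : EqOn h f (Icc y (c n)) := fun t ht => if_pos ht.2
        have hhg : EqOn h g (Icc (c n) (c (n+1))) := by
          intro t ht
          by_cases htc : t ≤ c n
          · have : t = c n := le_antisymm htc ht.1
            rw [hhdef]; simp only [this, if_pos le_rfl]; rw [hg0]
          · exact if_neg htc
        refine ⟨h, ?_, ?_⟩
        · rw [hhf ⟨le_rfl, hcy n⟩, hf0]
        · intro t ht
          rcases lt_trichotomy t (c n) with h1 | h1 | h1
          · have hmem : Icc y (c n) ∈ nhdsWithin t (Icc y (c (n+1))) :=
              mem_nhdsWithin.mpr ⟨Iio (c n), isOpen_Iio, h1,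
                fun s hs => ⟨hs.2.1, le_of_lt hs.1⟩⟩
            have hd := (hf t ⟨ht.1, h1.le⟩).mono_of_mem_nhdsWithin hmem
            have hev : h =ᶠ[nhdsWithin t (Icc y (c (n+1)))] f := by
              filter_upwards [hmem] with s hs using hhf hs
            have hht : h t = f t := hhf ⟨ht.1, h1.le⟩
            rw [hht]
            exact hd.congr_of_eventuallyEq hev hht
          · subst h1
            have hleft : HasDerivWithinAt h (vf m k ρ (c n) (f (c n))) (Icc y (c n)) (c n) :=
              (hf (c n) ⟨hcy n, le_rfl⟩).congr (fun s hs => hhf hs) (hhf ⟨hcy n, le_rfl⟩)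
            have hright : HasDerivWithinAt h (vf m k ρ (c n) (f (c n)))
                (Icc (c n) (c (n+1))) (c n) := by
              have := (hg (c n) ⟨le_rfl, hcmono n⟩).congr (fun s hs => hhg hs)
                (hhg ⟨le_rfl, hcmono n⟩)
              rwa [hg0] at this
            have hu := hleft.union hright
            rw [Icc_union_Icc_eq_Icc (hcy n) (hcmono n)] at hu
            have hht : h (c n) = f (c n) := hhf ⟨hcy n, le_rfl⟩
            rw [hht]
            exact hu
          · have hmem : Icc (c n) (c (n+1)) ∈ nhdsWithin t (Icc y (c (n+1))) :=
              mem_nhdsWithin.mpr ⟨Ioi (c n), isOpen_Ioi, h1,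
                fun s hs => ⟨le_of_lt hs.1, hs.2.2⟩⟩
            have hd := (hg t ⟨h1.le, ht.2⟩).mono_of_mem_nhdsWithin hmem
            have hev : h =ᶠ[nhdsWithin t (Icc y (c (n+1)))] g := by
              filter_upwards [hmem] with s hs using hhg hs
            have hht : h t = g t := hhg ⟨h1.le, ht.2⟩
            rw [hht]
            exact hd.congr_of_eventuallyEq hev hht
  obtain ⟨f, hf0, hf⟩ := main (Nat.ceil ((B - y) / δ))
  have hcN : c (Nat.ceil ((B - y) / δ)) = B := by
    apply min_eq_left
    have h1 : (B - y) / δ ≤ (Nat.ceil ((B - y) / δ) : ℝ) := Nat.le_ceil _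
    have := (div_le_iff₀ hδ0).mp h1
    linarith
  rw [hcN] at hf
  exact ⟨f, hf0, hf⟩

lemma key (μ σ r : ℝ) (hσ : 0 < σ) (hr : 0 < r)
    (α : ℝ → ℝ) (hα : ContDiff ℝ 1 α)
    (hα' : ∀ x ≥ (0:ℝ), r ≤ deriv α x)
    (y B : ℝ) (hyB : y ≤ B) :
    ∃ F : ℝ → ℝ,
      (∀ b ∈ Icc y B, ∀ W : ℝ → ℝ, ContDiff ℝ 2 W →
        (∀ x ∈ Icc y b, σ ^ 2 / 2 * deriv (deriv W) x
          + (μ - α (max (1 - x) 0)) * deriv W x - r * W x = 0) →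
        W b = (μ - α (max (1 - b) 0)) / r → deriv W b = 1 → W y = F b) ∧
      ContinuousOn F (Icc y B) ∧
      (∀ b ∈ Ioo y B, b ≠ 1 → ∃ D : ℝ, HasDerivAt F D b ∧
        (b < 1 → 0 ≤ D) ∧ (1 < b → D < 0)) := by
  have hσ2 : (σ:ℝ) ^ 2 ≠ 0 := by positivity
  set m : ℝ → ℝ := fun t => μ - α (max (1 - t) 0) with hmdef
  have hm : Continuous m := by
    apply continuous_const.sub
    exact hα.continuous.comp ((continuous_const.sub continuous_id).max continuous_const)
  have hαd : Differentiable ℝ α := hα.differentiable one_ne_zero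
  have hm_lt1 : ∀ b < (1:ℝ), HasDerivAt m (deriv α (1 - b)) b := by
    intro b hb
    have h2 : HasDerivAt (fun t : ℝ => (1:ℝ) - t) (-1) b := by
      simpa using (hasDerivAt_id b).const_sub 1
    have h3 := ((hαd (1 - b)).hasDerivAt).comp b h2
    have h1 : HasDerivAt (fun t : ℝ => μ - α (1 - t)) (deriv α (1 - b)) b := by
      simpa using h3.const_sub μ
    apply h1.congr_of_eventuallyEq
    filter_upwards [Iio_mem_nhds hb] with t ht
    simp only [hmdef]
    rw [max_eq_left (by simp at ht; linarith)]
  have hm_gt1 : ∀ b > (1:ℝ), HasDerivAt m 0 b := by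
    intro b hb
    apply (hasDerivAt_const b (μ - α 0)).congr_of_eventuallyEq
    filter_upwards [Ioi_mem_nhds hb] with t ht
    simp only [hmdef]
    rw [max_eq_right (by simp at ht; linarith)]
  -- the fundamental solution
  obtain ⟨f, hf0, hf⟩ := ode_global hm (2 / σ ^ 2) r hyB ((0:ℝ), (1:ℝ))
  set p : ℝ → ℝ := fun t => (f t).1 with hpdef
  set q : ℝ → ℝ := fun t => (f t).2 with hqdef
  have hp0 : p y = 0 := by show (f y).1 = 0; rw [hf0]
  have hq1 : q y = 1 := by show (f y).2 = 1; rw [hf0]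
  have hp : ∀ t ∈ Icc y B, HasDerivWithinAt p (q t) (Icc y B) t := fun t ht =>
    (ContinuousLinearMap.fst ℝ ℝ ℝ).hasFDerivAt.comp_hasDerivWithinAt t (hf t ht)
  have hq : ∀ t ∈ Icc y B,
      HasDerivWithinAt q (2 / σ ^ 2 * (r * p t - m t * q t)) (Icc y B) t := fun t ht =>
    (ContinuousLinearMap.snd ℝ ℝ ℝ).hasFDerivAt.comp_hasDerivWithinAt t (hf t ht)
  have hpc : ContinuousOn p (Icc y B) := fun t ht => (hp t ht).continuousWithinAt
  have hqc : ContinuousOn q (Icc y B) := fun t ht => (hq t ht).continuousWithinAt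
  -- interior versions
  have hpI : ∀ t ∈ Ioo y B, HasDerivAt p (q t) t := fun t ht =>
    (hp t (Ioo_subset_Icc_self ht)).hasDerivAt (Icc_mem_nhds ht.1 ht.2)
  have hqI : ∀ t ∈ Ioo y B, HasDerivAt q (2 / σ ^ 2 * (r * p t - m t * q t)) t := fun t ht =>
    (hq t (Ioo_subset_Icc_self ht)).hasDerivAt (Icc_mem_nhds ht.1 ht.2)
  -- boundary upgrade: HasDerivWithinAt within (Ici x) for x ∈ Ico y B
  have hIci : ∀ x ∈ Ico y B, Icc y B ∈ nhdsWithin x (Ici x) := by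
    intro x hx
    exact mem_nhdsWithin.mpr ⟨Iio B, isOpen_Iio, hx.2,
      fun s hs => ⟨hx.1.trans hs.2, hs.1.le⟩⟩
  -- positivity of q
  have hqpos : ∀ t ∈ Icc y B, 0 < q t := by
    by_contra hcon
    push_neg at hcon
    obtain ⟨t₀, ht₀, hq₀⟩ := hcon
    -- continuous extension of q
    set proj : ℝ → ℝ := fun t => min (max t y) B with hprojdef
    have hprojmem : ∀ t, proj t ∈ Icc y B :=
      fun t => ⟨le_min (le_max_right _ _) hyB, min_le_right _ _⟩
    have hprojeq : ∀ t ∈ Icc y B, proj t = t := by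
      intro t ht
      rw [hprojdef]
      simp only
      rw [max_eq_left ht.1, min_eq_left ht.2]
    have hQc : Continuous (q ∘ proj) := by
      apply hqc.comp_continuous ((continuous_id.max continuous_const).min continuous_const)
      exact hprojmem
    set S : Set ℝ := Icc y B ∩ (q ∘ proj) ⁻¹' (Iic 0) with hSdef
    have hSne : S.Nonempty := ⟨t₀, ht₀, by simp [hprojeq t₀ ht₀, hq₀]⟩
    have hScomp : IsCompact S :=
      isCompact_Icc.inter_right (isClosed_Iic.preimage hQc)
    set c := sInf S with hcdef
    have hcS : c ∈ S := hScomp.sInf_mem hSne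
    have hcIcc : c ∈ Icc y B := hcS.1
    have hqc0 : q c ≤ 0 := by
      have := hcS.2
      simpa [hprojeq c hcIcc] using this
    have hyc : y < c := by
      rcases eq_or_lt_of_le hcIcc.1 with h | h
      · exfalso; rw [← h] at hqc0; rw [hq1] at hqc0; linarith
      · exact h
    have hleft : ∀ t ∈ Ico y c, 0 < q t := by
      intro t ht
      by_contra hq2
      push_neg at hq2
      have htS : t ∈ S := ⟨⟨ht.1, ht.2.le.trans hcIcc.2⟩,
        by simp [hprojeq t ⟨ht.1, ht.2.le.trans hcIcc.2⟩, hq2]⟩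
      have : c ≤ t := csInf_le ⟨y, fun s hs => hs.1.1⟩ htS
      exact absurd ht.2 (not_lt.mpr this)
    -- q c = 0
    have hqc00 : q c = 0 := by
      refine le_antisymm hqc0 ?_
      have htend : Filter.Tendsto q (nhdsWithin c (Ico y c)) (nhds (q c)) :=
        ((hqc c hcIcc).mono (fun s hs => ⟨hs.1, hs.2.le.trans hcIcc.2⟩)).tendsto
      rw [nhdsWithin_Ico_eq_nhdsLT hyc] at htend
      have : ∀ᶠ t in nhdsWithin c (Iio c), 0 ≤ q t := by
        rw [← nhdsWithin_Ico_eq_nhdsLT hyc]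
        filter_upwards [self_mem_nhdsWithin] with t ht using (hleft t ht).le
      exact ge_of_tendsto htend this
    -- p c > 0
    have hpcpos : 0 < p c := by
      have hmono : StrictMonoOn p (Icc y c) := by
        apply strictMonoOn_of_deriv_pos (convex_Icc y c)
          (hpc.mono (Icc_subset_Icc_right hcIcc.2))
        intro t ht
        rw [interior_Icc] at ht
        have htI : t ∈ Ioo y B := ⟨ht.1, lt_of_lt_of_le ht.2 hcIcc.2⟩
        rw [(hpI t htI).deriv]
        exact hleft t ⟨ht.1.le, ht.2⟩
      have := hmono ⟨le_rfl, hyc.le⟩ ⟨hyc.le, le_rfl⟩ hyc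
      rwa [hp0] at this
    -- derivative of q at c is positive, contradiction with slope
    have hqd : HasDerivWithinAt q (2 / σ ^ 2 * (r * p c)) (Icc y B) c := by
      have := hq c hcIcc
      rwa [hqc00, mul_zero, sub_zero] at this
    have hL : 0 < 2 / σ ^ 2 * (r * p c) := by positivity
    have hslope := hasDerivWithinAt_iff_tendsto_slope.mp hqd
    have hsub : Ico y c ⊆ Icc y B \ {c} := by
      intro s hs
      exact ⟨⟨hs.1, hs.2.le.trans hcIcc.2⟩, fun h => (ne_of_lt hs.2) (by simpa using h)⟩
    have hslope2 : Filter.Tendsto (slope q c) (nhdsWithin c (Ico y c))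
        (nhds (2 / σ ^ 2 * (r * p c))) := hslope.mono_left (nhdsWithin_mono c hsub)
    rw [nhdsWithin_Ico_eq_nhdsLT hyc] at hslope2
    have hev : ∀ᶠ t in nhdsWithin c (Iio c), 0 < slope q c t :=
      hslope2.eventually (eventually_gt_nhds hL)
    have hev2 : ∀ᶠ t in nhdsWithin c (Iio c), slope q c t < 0 := by
      rw [← nhdsWithin_Ico_eq_nhdsLT hyc]
      filter_upwards [self_mem_nhdsWithin] with t ht
      have h1 : 0 < q t := hleft t ht
      have h2 : t - c < 0 := by linarith [ht.2]
      rw [slope_def_field, hqc00, sub_zero]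
      exact div_neg_of_pos_of_neg h1 h2
    obtain ⟨t, h1, h2⟩ := (hev.and hev2).exists
    linarith
  -- integrating factor
  set E : ℝ → ℝ := fun u => Real.exp (2 / σ ^ 2 * ∫ s in y..u, m s) with hEdef
  have hEd : ∀ u, HasDerivAt E (2 / σ ^ 2 * m u * E u) u := by
    intro u
    have h1 : HasDerivAt (fun v => ∫ s in y..v, m s) (m u) u :=
      intervalIntegral.integral_hasDerivAt_right (hm.intervalIntegrable _ _)
        (hm.stronglyMeasurableAtFilter _ _) hm.continuousAt
    have h2 := ((h1.const_mul (2 / σ ^ 2)).exp)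
    convert h2 using 1
    ring
  have hEpos : ∀ u, 0 < E u := fun u => Real.exp_pos _
  have hEy : E y = 1 := by simp [hEdef]
  have hEc : Continuous E := continuous_iff_continuousAt.mpr fun u => (hEd u).continuousAt
  have hr0 : (r:ℝ) ≠ 0 := ne_of_gt hr
  refine ⟨fun u => (q u * m u / r - p u) * E u, ?_, ?_, ?_⟩
  · -- representation
    intro b hb W hW hode hWbv hW'bv
    have hW1 : ContDiff ℝ 1 (deriv W) := by
      have h2' : ContDiff ℝ ((1:ℕ) + 1) W := by exact_mod_cast hW
      exact (contDiff_succ_iff_deriv.mp h2').2.2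
    have hWd : Differentiable ℝ W := hW.differentiable (by norm_num)
    have hW'd : Differentiable ℝ (deriv W) := hW1.differentiable one_ne_zero
    have hsub1 : Icc y b ⊆ Icc y B := Icc_subset_Icc_right hb.2
    set g : ℝ → ℝ := fun x => (q x * W x - p x * deriv W x) * E x with hgdef
    have hgc : ContinuousOn g (Icc y b) :=
      (((hqc.mono hsub1).mul hWd.continuous.continuousOn).sub
        ((hpc.mono hsub1).mul hW'd.continuous.continuousOn)).mul hEc.continuousOn
    have hgd : ∀ x ∈ Ico y b, HasDerivWithinAt g 0 (Ici x) x := by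
      intro x hx
      have hxB : x ∈ Ico y B := ⟨hx.1, lt_of_lt_of_le hx.2 hb.2⟩
      have hpx := (hp x (Ico_subset_Icc_self hxB)).mono_of_mem_nhdsWithin (hIci x hxB)
      have hqx := (hq x (Ico_subset_Icc_self hxB)).mono_of_mem_nhdsWithin (hIci x hxB)
      have hWx : HasDerivWithinAt W (deriv W x) (Ici x) x :=
        (hWd x).hasDerivAt.hasDerivWithinAt
      have hW'x : HasDerivWithinAt (deriv W) (deriv (deriv W) x) (Ici x) x :=
        (hW'd x).hasDerivAt.hasDerivWithinAt
      have hEx := (hEd x).hasDerivWithinAt (s := Ici x)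
      have hcomb := ((hqx.mul hWx).sub (hpx.mul hW'x)).mul hEx
      have hodex := hode x ⟨hx.1, hx.2.le⟩
      have hW2 : deriv (deriv W) x = 2 / σ ^ 2 * (r * W x - m x * deriv W x) := by
        have hmx : m x = μ - α (max (1 - x) 0) := rfl
        rw [hmx]
        field_simp at hodex ⊢
        linarith
      refine hcomb.congr_deriv ?_
      simp only [hW2, Pi.mul_apply, Pi.sub_apply]
      ring
    have hcst := constant_of_has_deriv_right_zero hgc hgd b ⟨hb.1, le_rfl⟩
    have h1 : g y = W y := by
      simp only [hgdef, hp0, hq1, hEy]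
      ring
    have h2 : g b = (q b * m b / r - p b) * E b := by
      simp only [hgdef]
      rw [hWbv, hW'bv]
      have : m b = μ - α (max (1 - b) 0) := rfl
      rw [this]
      ring
    rw [← h1, ← hcst, h2]
  · -- continuity
    exact (((hqc.mul hm.continuousOn).div_const r).sub hpc).mul hEc.continuousOn
  · -- derivative
    intro b hb hb1
    have hpb := hpI b hb
    have hqb := hqI b hb
    have hEb := hEd b
    have hqbpos : 0 < q b := hqpos b (Ioo_subset_Icc_self hb)
    rcases lt_or_gt_of_ne hb1 with hlt | hgt
    · refine ⟨q b * (deriv α (1 - b) - r) / r * E b, ?_, fun _ => ?_, fun h => absurd h (by linarith)⟩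
      · have hmb := hm_lt1 b hlt
        have hcomb := (((hqb.mul hmb).div_const r).sub hpb).mul hEb
        refine hcomb.congr_deriv ?_
        simp only [Pi.mul_apply, Pi.sub_apply]
        field_simp
        ring
      · have hge : r ≤ deriv α (1 - b) := hα' (1 - b) (by linarith)
        have h1 : 0 ≤ q b * (deriv α (1 - b) - r) / r :=
          div_nonneg (mul_nonneg hqbpos.le (by linarith)) hr.le
        exact mul_nonneg h1 (hEpos b).le
    · refine ⟨-(q b * E b), ?_, fun h => absurd h (by linarith), fun _ => ?_⟩
      · have hmb := hm_gt1 b hgt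
        have hcomb := (((hqb.mul hmb).div_const r).sub hpb).mul hEb
        refine hcomb.congr_deriv ?_
        simp only [Pi.mul_apply, Pi.sub_apply]
        field_simp
        ring
      · exact neg_lt_zero.mpr (mul_pos hqbpos (hEpos b))


theorem stmt_7 (μ σ r : ℝ) (hσ : 0 < σ) (hr : 0 < r) (hμr : r < μ)
    (α : ℝ → ℝ) (hα : ContDiff ℝ 1 α) (hαconv : ConvexOn ℝ (Ici 0) α)
    (hαmono : StrictMonoOn α (Ici 0)) (hα0 : α 0 = 0)
    (hα' : ∀ x ≥ (0:ℝ), r ≤ deriv α x)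
    (y : ℝ) (hy : y ∈ Ico (0:ℝ) 1)
    (W : ℝ → ℝ → ℝ) (hW : ∀ b ≥ y, ContDiff ℝ 2 (W b))
    (hode : ∀ b ≥ y, ∀ x ∈ Icc y b,
      σ ^ 2 / 2 * deriv (deriv (W b)) x + (μ - α (max (1 - x) 0)) * deriv (W b) x
        - r * W b x = 0)
    (hWb : ∀ b ≥ y, W b b = (μ - α (max (1 - b) 0)) / r)
    (hW'b : ∀ b ≥ y, deriv (W b) b = 1) :
    MonotoneOn (fun b => W b y) (Icc y 1) ∧ StrictAntiOn (fun b => W b y) (Ioi 1) := by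
  obtain ⟨hy0, hy1⟩ := hy
  constructor
  · obtain ⟨F, hrep, hFc, hFd⟩ := key μ σ r hσ hr α hα hα' y 2 (by linarith)
    have hEq : EqOn (fun b => W b y) F (Icc y 1) := by
      intro b hb
      exact hrep b ⟨hb.1, by linarith [hb.2]⟩ (W b) (hW b hb.1) (hode b hb.1)
        (hWb b hb.1) (hW'b b hb.1)
    have hmono : MonotoneOn F (Icc y 1) := by
      apply monotoneOn_of_deriv_nonneg (convex_Icc y 1)
        (hFc.mono (Icc_subset_Icc_right (by norm_num)))
      · intro x hx
        rw [interior_Icc] at hx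
        obtain ⟨D, hD, _, _⟩ := hFd x ⟨hx.1, by linarith [hx.2]⟩ (ne_of_lt hx.2)
        exact hD.differentiableAt.differentiableWithinAt
      · intro x hx
        rw [interior_Icc] at hx
        obtain ⟨D, hD, hs, _⟩ := hFd x ⟨hx.1, by linarith [hx.2]⟩ (ne_of_lt hx.2)
        rw [hD.deriv]
        exact hs hx.2
    exact hmono.congr hEq.symm
  · intro b₁ hb₁ b₂ hb₂ hlt
    simp only [mem_Ioi] at hb₁ hb₂
    obtain ⟨F, hrep, hFc, hFd⟩ := key μ σ r hσ hr α hα hα' y (b₂ + 1) (by linarith)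
    have hyb1 : y ≤ b₁ := by linarith
    have hyb2 : y ≤ b₂ := by linarith
    have h1 : W b₁ y = F b₁ := hrep b₁ ⟨hyb1, by linarith⟩ (W b₁) (hW b₁ hyb1)
      (hode b₁ hyb1) (hWb b₁ hyb1) (hW'b b₁ hyb1)
    have h2 : W b₂ y = F b₂ := hrep b₂ ⟨hyb2, by linarith⟩ (W b₂) (hW b₂ hyb2)
      (hode b₂ hyb2) (hWb b₂ hyb2) (hW'b b₂ hyb2)
    have hanti : StrictAntiOn F (Icc 1 (b₂ + 1)) := by
      apply strictAntiOn_of_deriv_neg (convex_Icc _ _)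
        (hFc.mono (Icc_subset_Icc_left (by linarith)))
      intro x hx
      rw [interior_Icc] at hx
      obtain ⟨D, hD, _, hneg⟩ := hFd x ⟨by linarith [hx.1], hx.2⟩ (ne_of_gt hx.1)
      rw [hD.deriv]
      exact hneg hx.1
    have := hanti ⟨hb₁.le, by linarith⟩ ⟨hb₂.le, by linarith⟩ hlt
    show W b₂ y < W b₁ y
    rw [h1, h2]
    exact this
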